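/- Let A : H ⇒ H be maximally monotone, η > 0, and J = J_{ηA} := (Id + ηA)^{-1} its resolvent. Let y₀ = x_{−1} = x₀ ∈ H and define for k ≥ 0: y_{k+1} := J(x_k), x_{k+1} := y_{k+1} + (k/(k+2))(y_{k+1} − y_k) − (k/(k+2))(y_k − x_{k−1}) (Kim's accelerated proximal point method). Then for every k ≥ 0 the sequence {x_k} satisfies the Halpern-type recursion x_{k+1} = (1/(k+2)) x₀ + ((k+1)/(k+2)) (2 J(x_k) − x_k). -/

import Mathlib

theorem stmt17 {H : Type*} [NormedAddCommGroup H] [InnerProductSpace ℝ H]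
    (J : H → H)
    (hJ : ∀ x y : H, ‖J x - J y‖^2 ≤ (inner ℝ (J x - J y) (x - y) : ℝ))
    (x₀ : H) (x y : ℕ → H)
    (hy0 : y 0 = x₀) (hx0 : x 0 = x₀)
    (hy : ∀ k, y (k+1) = J (x k))
    (hx : ∀ k, x (k+1) = y (k+1) + ((k:ℝ)/((k:ℝ)+2)) • (y (k+1) - y k)
        - ((k:ℝ)/((k:ℝ)+2)) • (y k - x (k-1))) :
    ∀ k, x (k+1) = (1/((k:ℝ)+2)) • x₀ + (((k:ℝ)+1)/((k:ℝ)+2)) • ((2:ℝ) • J (x k) - x k) := by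
  intro k
  induction k with
  | zero =>
    have h1 := hx 0
    rw [hy 0, hx0, hy0] at h1
    rw [h1, hx0]
    match_scalars <;> norm_num
  | succ k ih =>
    have h1 := hx (k + 1)
    have hk1 : (k + 1) - 1 = k := rfl
    rw [hk1, hy (k + 1), hy k] at h1
    rw [h1, ih]
    push_cast
    have h2 : (k : ℝ) + 2 ≠ 0 := by positivity
    have h3 : (k : ℝ) + 1 + 2 ≠ 0 := by positivity
    match_scalars <;> field_simp <;> ring
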